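/- Let k ≥ 1, d ≥ 4, and n ≥ k(d-1)+2 be integers. Then the maximum number of edges of a simple k-connected graph of order n and diameter d equals ((3d-5)k² + (5-d)k)/2 + C(n-kd+k-2, 2) + 3k(n-kd+k-2), where C(m,2) = m(m-1)/2 denotes the binomial coefficient. That is, every simple k-connected graph of order n and diameter d has at most this many edges, and some simple k-connected graph of order n and diameter d attains this number of edges. -/

import Mathlib

open Finset

namespace OreArith
def Q (c : ℕ → ℕ) (N : ℕ) : ℕ := ∑ j ∈ range N, c j * (c (j-1) + c j + c (j+1))
def bb (k d : ℕ) : ℕ → ℕ := fun j =>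
  if j = 0 then 0 else if j = 1 then 1 else if j ≤ d then k else if j = d+1 then 1 else 0
def cc (k d m : ℕ) : ℕ → ℕ := fun j =>
  if j = 0 then 0 else if j = 1 then 1 else if j = 3 then k + m
  else if j ≤ d then k else if j = d+1 then 1 else 0

section vals
variable {k d m j : ℕ}

lemma bb_zero : bb k d 0 = 0 := rfl
lemma bb_one : bb k d 1 = 1 := by unfold bb; simp
lemma bb_mid (h2 : 2 ≤ j) (hjd : j ≤ d) : bb k d j = k := by
  unfold bb; split_ifs <;> first | assumption | exact ‹False›.elim | omega
lemma bb_top (hd : 1 ≤ d) : bb k d (d+1) = 1 := by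
  unfold bb; split_ifs <;> first | assumption | exact ‹False›.elim | omega
lemma bb_gt (h : d + 2 ≤ j) : bb k d j = 0 := by
  unfold bb; split_ifs <;> first | assumption | exact ‹False›.elim | omega
lemma bb_le (hk : 1 ≤ k) : ∀ j, bb k d j ≤ k := by
  intro j; unfold bb; split_ifs <;> first | assumption | exact ‹False›.elim | omega

lemma cc_zero : cc k d m 0 = 0 := rfl
lemma cc_one : cc k d m 1 = 1 := by unfold cc; simp
lemma cc_three (hd : 3 ≤ d) : cc k d m 3 = k + m := rfl
lemma cc_mid (h2 : 2 ≤ j) (h3 : j ≠ 3) (hjd : j ≤ d) : cc k d m j = k := by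
  unfold cc; split_ifs <;> first | assumption | exact ‹False›.elim | omega
lemma cc_top (hd : 3 ≤ d) : cc k d m (d+1) = 1 := by
  unfold cc; split_ifs <;> first | assumption | exact ‹False›.elim | omega
lemma cc_gt (h : d + 2 ≤ j) (hd : 3 ≤ d) : cc k d m j = 0 := by
  unfold cc; split_ifs <;> first | assumption | exact ‹False›.elim | omega
lemma cc_ge_bb (hd : 3 ≤ d) : ∀ j, bb k d j ≤ cc k d m j := by
  intro j; unfold bb cc; split_ifs <;> first | assumption | exact ‹False›.elim | omega
end vals

lemma sum_shift (f g : ℕ → ℕ) (M : ℕ) (h0 : f 0 * g 0 = 0) (hM : f M * g (M+1) = 0) :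
    ∑ j ∈ range (M+1), f j * g (j+1) = ∑ j ∈ range (M+1), f (j-1) * g j := by
  rw [Finset.sum_range_succ, hM, add_zero, Finset.sum_range_succ']
  simp only [Nat.add_sub_cancel, Nat.zero_sub, h0, add_zero]

lemma sum_range_piece (d : ℕ) (hd : 4 ≤ d) (F : ℕ → ℕ) (v : ℕ)
    (hmid : ∀ j, 4 ≤ j → j < d → F j = v) :
    ∑ j ∈ range (d+2), F j = F 0 + F 1 + F 2 + F 3 + (d-4)*v + F d + F (d+1) := by
  rw [Finset.sum_range_succ, Finset.sum_range_succ, range_eq_Ico,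
    ← Finset.sum_Ico_consecutive _ (by omega : (0:ℕ) ≤ 4) (by omega : 4 ≤ d)]
  have h1 : ∑ j ∈ Ico 0 4, F j = F 0 + F 1 + F 2 + F 3 := by
    rw [← range_eq_Ico]; simp [Finset.sum_range_succ]
  have h2 : ∑ j ∈ Ico 4 d, F j = (d-4) * v := by
    rw [Finset.sum_Ico_eq_sum_range]
    rw [Finset.sum_congr rfl (fun i hi => hmid (4+i) (by omega)
      (by simp only [mem_range] at hi; omega))]
    simp [mul_comm]
  omega

lemma Q_eq (f : ℕ → ℕ) (M : ℕ) (h0 : f 0 = 0) (hM : f (M+1) = 0) :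
    Q f (M+1) = (∑ j ∈ range (M+1), f j * f j) + 2 * ∑ j ∈ range (M+1), f j * f (j+1) := by
  unfold Q
  have e1 : ∀ j ∈ range (M+1), f j * (f (j-1) + f j + f (j+1))
      = f j * f (j-1) + f j * f j + f j * f (j+1) := by intro j _; ring
  rw [Finset.sum_congr rfl e1, Finset.sum_add_distrib, Finset.sum_add_distrib]
  have e2 : ∑ j ∈ range (M+1), f j * f (j-1) = ∑ j ∈ range (M+1), f j * f (j+1) := by
    rw [sum_shift f f M (by simp [h0]) (by simp [hM])]
    exact Finset.sum_congr rfl fun j _ => mul_comm _ _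
  omega

variable {k d m : ℕ}

lemma sum_bb (hd : 4 ≤ d) : ∑ j ∈ range (d+2), bb k d j = k * (d-1) + 2 := by
  obtain ⟨e, rfl⟩ : ∃ e, d = e + 4 := ⟨d - 4, by omega⟩
  rw [sum_range_piece _ hd _ k (fun j h4 hjd => bb_mid (by omega) (by omega))]
  rw [bb_zero, bb_one, bb_mid (by omega) (by omega),
    bb_mid (by omega) (by omega), bb_mid (by omega) (by omega), bb_top (by omega)]
  simp only [show e+4-4 = e from by omega, show e+4-1 = e+3 from by omega]
  ring

lemma sum_cc (hd : 4 ≤ d) : ∑ j ∈ range (d+2), cc k d m j = k * (d-1) + 2 + m := by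
  obtain ⟨e, rfl⟩ : ∃ e, d = e + 4 := ⟨d - 4, by omega⟩
  rw [sum_range_piece _ hd _ k (fun j h4 hjd => cc_mid (by omega) (by omega) (by omega))]
  rw [cc_zero, cc_one, cc_mid (by omega) (by omega) (by omega), cc_three (by omega),
    cc_mid (by omega) (by omega) (by omega), cc_top (by omega)]
  simp only [show e+4-4 = e from by omega, show e+4-1 = e+3 from by omega]
  ring

lemma Q_bb (hd : 4 ≤ d) : Q (bb k d) (d+2) = (3*d-5)*k^2 + 4*k + 2 := by
  obtain ⟨e, rfl⟩ : ∃ e, d = e + 4 := ⟨d - 4, by omega⟩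
  have := Q_eq (bb k (e+4)) (e+4+1) rfl (bb_gt (by omega))
  rw [show e+4+1+1 = e+4+2 from rfl] at this
  rw [this]
  rw [sum_range_piece _ hd _ (k*k) (fun j h4 hjd => by
      rw [bb_mid (j := j) (by omega) (by omega)]),
    sum_range_piece _ hd _ (k*k) (fun j h4 hjd => by
      rw [bb_mid (j := j) (by omega) (by omega), bb_mid (j := j+1) (by omega) (by omega)])]
  rw [show bb k (e+4) (e+4+1+1) = 0 from bb_gt (by omega),
    show bb k (e+4) (e+4+1) = 1 from bb_top (by omega)]
  rw [bb_zero, bb_one, bb_mid (j := 2) (by omega) (by omega),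
    bb_mid (j := 3) (by omega) (by omega), bb_mid (j := 4) (by omega) (by omega),
    bb_mid (j := e+4) (by omega) (by omega)]
  simp only [show e+4-4 = e from by omega, show 3*(e+4)-5 = 3*e+7 from by omega]
  ring

lemma Q_cc (hd : 4 ≤ d) :
    Q (cc k d m) (d+2) = (3*d-5)*k^2 + 4*k + 2 + 6*k*m + m^2 := by
  obtain ⟨e, rfl⟩ : ∃ e, d = e + 4 := ⟨d - 4, by omega⟩
  have := Q_eq (cc k (e+4) m) (e+4+1) rfl (cc_gt (by omega) (by omega))
  rw [show e+4+1+1 = e+4+2 from rfl] at this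
  rw [this]
  rw [sum_range_piece _ hd _ (k*k) (fun j h4 hjd => by
      rw [cc_mid (j := j) (by omega) (by omega) (by omega)]),
    sum_range_piece _ hd _ (k*k) (fun j h4 hjd => by
      rw [cc_mid (j := j) (by omega) (by omega) (by omega),
        cc_mid (j := j+1) (by omega) (by omega) (by omega)])]
  rw [show cc k (e+4) m (e+4+1+1) = 0 from cc_gt (by omega) (by omega),
    show cc k (e+4) m (e+4+1) = 1 from cc_top (by omega)]
  rw [cc_zero, cc_one, cc_mid (j := 2) (by omega) (by omega) (by omega),
    cc_three (by omega), cc_mid (j := 4) (by omega) (by omega) (by omega),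
    cc_mid (j := e+4) (by omega) (by omega) (by omega)]
  simp only [show e+4-4 = e from by omega, show 3*(e+4)-5 = 3*e+7 from by omega]
  ring
lemma cc_ge_k {k d m j : ℕ} (h2 : 2 ≤ j) (hjd : j ≤ d) : k ≤ cc k d m j := by
  unfold cc; split_ifs <;> first | assumption | exact ‹False›.elim | omega

lemma main_ineq (hk : 1 ≤ k) (hd : 4 ≤ d) (c : ℕ → ℕ)
    (hc0 : c 0 = 0) (hc1 : c 1 = 1) (hck : ∀ j, 2 ≤ j → j ≤ d → k ≤ c j)
    (hcd : 1 ≤ c (d+1)) (htop : ∀ j, d+2 ≤ j → c j = 0)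
    (hsum : ∑ j ∈ range (d+2), c j = k*(d-1)+2+m) :
    Q c (d+2) ≤ (3*d-5)*k^2 + 4*k + 2 + 6*k*m + m^2 := by
  have hpoint : ∀ j, bb k d j ≤ c j := by
    intro j
    unfold bb
    split_ifs with h1 h2 h3 h4
    · omega
    · subst h2; omega
    · exact hck j (by omega) h3
    · subst h4; exact hcd
    · omega
  set e : ℕ → ℕ := fun j => c j - bb k d j with he
  have hsplit : ∀ j, c j = bb k d j + e j := by
    intro j; have := hpoint j; simp only [he]; omega
  have hesum : ∑ j ∈ range (d+2), e j = m := by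
    have h1 : ∑ j ∈ range (d+2), c j = ∑ j ∈ range (d+2), (bb k d j + e j) :=
      Finset.sum_congr rfl fun j _ => hsplit j
    rw [Finset.sum_add_distrib, sum_bb hd, hsum] at h1
    omega
  have he0 : e 0 = 0 := by simp [he, hc0, bb_zero]
  have he1 : e 1 = 0 := by simp [he, hc1]; unfold bb; simp
  -- window bound
  have hwin : ∀ j, 2 ≤ j → j ≤ d+1 → c (j-1) + c j + c (j+1) ≤ 3*k + m := by
    intro j h2 hjd
    set W : Finset ℕ := {j-1, j, j+1} with hWdef
    have hsub : W ⊆ range (d+3) := by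
      intro x hx; simp only [hWdef, mem_insert, mem_singleton] at hx
      simp only [mem_range]; omega
    have hW : ∑ i ∈ W, c i = c (j-1) + c j + c (j+1) := by
      rw [hWdef, Finset.sum_insert (by simp only [mem_insert, mem_singleton]; omega),
        Finset.sum_insert (by simp only [mem_singleton]; omega), Finset.sum_singleton]
      ring
    have hWb3 : ∑ i ∈ W, bb k d i ≤ 3*k := by
      calc ∑ i ∈ W, bb k d i ≤ ∑ i ∈ W, k := Finset.sum_le_sum fun i _ => bb_le hk i
        _ = W.card * k := by rw [Finset.sum_const, smul_eq_mul]
        _ ≤ 3 * k := by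
            have : W.card ≤ 3 := by
              rw [hWdef]
              apply le_trans (Finset.card_insert_le _ _)
              have h2 := Finset.card_insert_le j ({j+1} : Finset ℕ)
              have h3 : ({j+1} : Finset ℕ).card = 1 := Finset.card_singleton _
              omega
            exact Nat.mul_le_mul_right k this
    have htot : ∑ i ∈ range (d+3), c i = k*(d-1)+2+m := by
      rw [show d+3 = d+2+1 from rfl, Finset.sum_range_succ, hsum, htop (d+2) le_rfl]
      try omega
    have htotb : ∑ i ∈ range (d+3), bb k d i = k*(d-1)+2 := by
      rw [show d+3 = d+2+1 from rfl, Finset.sum_range_succ, sum_bb hd, bb_gt (by omega)]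
      try omega
    have hsd := Finset.sum_sdiff (f := c) hsub
    have hsdb := Finset.sum_sdiff (f := bb k d) hsub
    have hmono : ∑ i ∈ range (d+3) \ W, bb k d i ≤ ∑ i ∈ range (d+3) \ W, c i :=
      Finset.sum_le_sum fun i _ => hpoint i
    omega
  -- split Q
  have step1 : Q c (d+2) = (∑ j ∈ range (d+2), bb k d j * (c (j-1) + c j + c (j+1)))
      + ∑ j ∈ range (d+2), e j * (c (j-1) + c j + c (j+1)) := by
    unfold Q
    rw [← Finset.sum_add_distrib]
    refine Finset.sum_congr rfl fun j _ => ?_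
    rw [hsplit j]; ring
  -- symmetry
  have hsym : ∑ j ∈ range (d+2), bb k d j * (c (j-1) + c j + c (j+1))
      = ∑ j ∈ range (d+2), c j * (bb k d (j-1) + bb k d j + bb k d (j+1)) := by
    have exp1 : ∑ j ∈ range (d+2), bb k d j * (c (j-1) + c j + c (j+1))
        = (∑ j ∈ range (d+2), bb k d j * c (j-1)) + (∑ j ∈ range (d+2), bb k d j * c j)
          + ∑ j ∈ range (d+2), bb k d j * c (j+1) := by
      rw [← Finset.sum_add_distrib, ← Finset.sum_add_distrib]
      exact Finset.sum_congr rfl fun j _ => by ring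
    have exp2 : ∑ j ∈ range (d+2), c j * (bb k d (j-1) + bb k d j + bb k d (j+1))
        = (∑ j ∈ range (d+2), c j * bb k d (j-1)) + (∑ j ∈ range (d+2), c j * bb k d j)
          + ∑ j ∈ range (d+2), c j * bb k d (j+1) := by
      rw [← Finset.sum_add_distrib, ← Finset.sum_add_distrib]
      exact Finset.sum_congr rfl fun j _ => by ring
    have t3 : ∑ j ∈ range (d+1+1), bb k d j * c (j+1)
        = ∑ j ∈ range (d+1+1), bb k d (j-1) * c j :=
      sum_shift (bb k d) c (d+1) (by rw [hc0, mul_zero]) (by rw [htop (d+1+1) le_rfl, mul_zero])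
    have t1 : ∑ j ∈ range (d+1+1), c j * bb k d (j+1)
        = ∑ j ∈ range (d+1+1), c (j-1) * bb k d j :=
      sum_shift c (bb k d) (d+1) (by rw [hc0, zero_mul]) (by rw [bb_gt le_rfl, mul_zero])
    have c3 : ∑ j ∈ range (d+2), bb k d (j-1) * c j = ∑ j ∈ range (d+2), c j * bb k d (j-1) :=
      Finset.sum_congr rfl fun j _ => mul_comm _ _
    have c1 : ∑ j ∈ range (d+2), c (j-1) * bb k d j = ∑ j ∈ range (d+2), bb k d j * c (j-1) :=
      Finset.sum_congr rfl fun j _ => mul_comm _ _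
    have c2 : ∑ j ∈ range (d+2), bb k d j * c j = ∑ j ∈ range (d+2), c j * bb k d j :=
      Finset.sum_congr rfl fun j _ => mul_comm _ _
    rw [show d+1+1 = d+2 from rfl] at t3 t1
    omega
  -- second split
  have step3 : ∑ j ∈ range (d+2), c j * (bb k d (j-1) + bb k d j + bb k d (j+1))
      = Q (bb k d) (d+2) + ∑ j ∈ range (d+2), e j * (bb k d (j-1) + bb k d j + bb k d (j+1)) := by
    unfold Q
    rw [← Finset.sum_add_distrib]
    refine Finset.sum_congr rfl fun j _ => ?_
    rw [hsplit j]; ring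
  -- bounds
  have bnd1 : ∑ j ∈ range (d+2), e j * (bb k d (j-1) + bb k d j + bb k d (j+1))
      ≤ 3 * (k * m) := by
    calc ∑ j ∈ range (d+2), e j * (bb k d (j-1) + bb k d j + bb k d (j+1))
        ≤ ∑ j ∈ range (d+2), e j * (3*k) := by
          refine Finset.sum_le_sum fun j _ => Nat.mul_le_mul_left _ ?_
          have := bb_le (d := d) hk (j-1); have := bb_le (d := d) hk j
          have := bb_le (d := d) hk (j+1); omega
      _ = (∑ j ∈ range (d+2), e j) * (3*k) := by rw [Finset.sum_mul]
      _ = 3 * (k * m) := by rw [hesum]; ring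
  have bnd2 : ∑ j ∈ range (d+2), e j * (c (j-1) + c j + c (j+1))
      ≤ 3*(k*m) + m*m := by
    calc ∑ j ∈ range (d+2), e j * (c (j-1) + c j + c (j+1))
        ≤ ∑ j ∈ range (d+2), e j * (3*k + m) := by
          refine Finset.sum_le_sum fun j hj => ?_
          by_cases hej : e j = 0
          · rw [hej]; simp
          · refine Nat.mul_le_mul_left _ (hwin j ?_ ?_)
            · by_contra hlt
              push_neg at hlt
              interval_cases j
              · exact hej he0
              · exact hej he1
            · simp only [mem_range] at hj; omega
      _ = (∑ j ∈ range (d+2), e j) * (3*k + m) := by rw [Finset.sum_mul]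
      _ = 3*(k*m) + m*m := by rw [hesum]; ring
  have hQbb := Q_bb (k := k) hd
  have hfin1 : 6*k*m = 6*(k*m) := by ring
  have hfin2 : m^2 = m*m := by ring
  omega

end OreArith


open SimpleGraph

namespace OreGraph

variable {V : Type*} [Fintype V]

lemma walk_ivt {G : SimpleGraph V} (f : V → ℕ)
    (hstep : ∀ a b, G.Adj a b → f b ≤ f a + 1) (i : ℕ) :
    ∀ {x y : V} (w : G.Walk x y), f x ≤ i → i ≤ f y → ∃ z ∈ w.support, f z = i := by
  intro x y w
  induction w with
  | nil =>
    rename_i u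
    intro hx hy
    exact ⟨u, by simp, by omega⟩
  | @cons a b y' h p ih =>
    intro hx hy
    by_cases hxi : f a = i
    · exact ⟨a, by simp, hxi⟩
    · have hb : f b ≤ i := by have := hstep a b h; omega
      obtain ⟨z, hz, hzi⟩ := ih hb hy
      exact ⟨z, by simp [hz], hzi⟩

lemma connected_of_pieces {G : SimpleGraph V}
    (hcon : ∀ S : Set V, S.ncard < k → (G.induce Sᶜ).Connected) (hk : 1 ≤ k) :
    G.Connected := by
  have h := hcon ∅ (by simpa using (by omega : 0 < k))
  rw [Set.compl_empty] at h
  exact Connected.map (induceUnivIso G).toHom (induceUnivIso G).toEquiv.surjective h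

variable {k d m : ℕ}

lemma upper_main (hk : 1 ≤ k) (hd : 4 ≤ d)
    {V : Type*} [Fintype V] [DecidableEq V] (G : SimpleGraph V) [DecidableRel G.Adj]
    (hcon : ∀ S : Set V, S.ncard < k → (G.induce Sᶜ).Connected)
    (hcard : Fintype.card V = k*(d-1)+2+m) (hdiam : G.diam = d) :
    2 * G.edgeFinset.card + (k*(d-1)+2+m)
      ≤ (3*d-5)*k^2 + 4*k + 2 + 6*k*m + m^2 := by
  have hconn : G.Connected := connected_of_pieces hcon hk
  have hnV : Nonempty V := by
    refine Fintype.card_pos_iff.mp ?_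
    omega
  obtain ⟨u, v, huv⟩ := G.exists_dist_eq_diam
  rw [hdiam] at huv
  have htop' : G.ediam ≠ ⊤ := G.ediam_ne_top_of_diam_ne_zero (by omega)
  have hle : ∀ x, G.dist u x ≤ d := fun x => hdiam ▸ G.dist_le_diam htop'
  set ℓ : V → ℕ := fun x => G.dist u x + 1 with hℓ
  set c : ℕ → ℕ := fun j => (Finset.univ.filter (fun x => ℓ x = j)).card with hc
  have hcj : ∀ j, c j = (Finset.univ.filter (fun x => ℓ x = j)).card := fun j => rfl
  have hℓx : ∀ x, ℓ x = G.dist u x + 1 := fun x => rfl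
  have hstep : ∀ a b, G.Adj a b → G.dist u b ≤ G.dist u a + 1 := by
    intro a b hab
    have h1 := hconn.dist_triangle (u := u) (v := a) (w := b)
    have h2 : G.dist a b = 1 := SimpleGraph.dist_eq_one_iff_adj.mpr hab
    omega
  have hc0 : c 0 = 0 := by
    rw [hcj 0, Finset.card_eq_zero, Finset.filter_eq_empty_iff]
    intro x _
    rw [hℓx x]
    omega
  have hc1 : c 1 = 1 := by
    rw [hcj 1]
    have heq : (Finset.univ.filter fun x => ℓ x = 1) = {u} := by
      ext x
      simp only [Finset.mem_filter, Finset.mem_univ, true_and, Finset.mem_singleton]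
      rw [hℓx x]
      constructor
      · intro h
        exact ((hconn.dist_eq_zero_iff).mp (by omega)).symm
      · rintro rfl
        rw [SimpleGraph.dist_self]
    rw [heq, Finset.card_singleton]
  have hck : ∀ j, 2 ≤ j → j ≤ d → k ≤ c j := by
    intro j h2 hjd
    by_contra hlt
    push_neg at hlt
    set S : Set V := {x | ℓ x = j} with hS
    have hncard : S.ncard < k := by
      have he : S.ncard = c j := by
        rw [Set.ncard_eq_toFinset_card', hcj j]
        congr 1
        ext x
        simp [hS]
      omega
    have hcS := hcon S hncard
    have hu : u ∈ Sᶜ := by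
      simp only [hS, Set.mem_compl_iff, Set.mem_setOf_eq, hℓx u, SimpleGraph.dist_self]
      omega
    have hv : v ∈ Sᶜ := by
      simp only [hS, Set.mem_compl_iff, Set.mem_setOf_eq, hℓx v, huv]
      omega
    obtain ⟨w⟩ := hcS.preconnected ⟨u, hu⟩ ⟨v, hv⟩
    obtain ⟨z, hz, hzi⟩ := walk_ivt (fun x => G.dist u x) hstep (j-1)
      (w.map (SimpleGraph.Embedding.induce Sᶜ).toHom)
      (by show G.dist u u ≤ j - 1; rw [SimpleGraph.dist_self]; omega)
      (by show j - 1 ≤ G.dist u v; rw [huv]; omega)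
    rw [SimpleGraph.Walk.support_map] at hz
    obtain ⟨⟨z', hz'⟩, _, rfl⟩ := List.mem_map.mp hz
    refine hz' ?_
    have hzi' : G.dist u z' = j - 1 := hzi
    show ℓ z' = j
    rw [hℓx]
    omega
  have hcd1 : 1 ≤ c (d+1) := by
    have hm : v ∈ Finset.univ.filter (fun x => ℓ x = d+1) := by
      simp only [Finset.mem_filter, Finset.mem_univ, true_and, hℓx v, huv]
    rw [hcj]
    exact Finset.card_pos.mpr ⟨v, hm⟩
  have hctop : ∀ j, d+2 ≤ j → c j = 0 := by
    intro j hj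
    rw [hcj, Finset.card_eq_zero, Finset.filter_eq_empty_iff]
    intro x _
    have := hle x
    rw [hℓx]
    omega
  have hsum : ∑ j ∈ Finset.range (d+2), c j = k*(d-1)+2+m := by
    rw [← hcard, ← Finset.card_univ]
    exact (Finset.card_eq_sum_card_fiberwise (f := ℓ) (fun x _ => by
      simp only [Finset.coe_range, Set.mem_Iio, Finset.mem_range]
      rw [hℓx]
      have := hle x
      omega)).symm
  -- degree bound
  have hdeg : ∀ x : V, G.degree x + 1 ≤ c (ℓ x - 1) + c (ℓ x) + c (ℓ x + 1) := by
    intro x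
    have hsubset : insert x (G.neighborFinset x) ⊆
        (Finset.univ.filter fun y => ℓ y = ℓ x - 1) ∪
        ((Finset.univ.filter fun y => ℓ y = ℓ x) ∪
         (Finset.univ.filter fun y => ℓ y = ℓ x + 1)) := by
      intro y hy
      rcases Finset.mem_insert.mp hy with rfl | hy
      · simp only [Finset.mem_union, Finset.mem_filter, Finset.mem_univ, true_and]
        tauto
      · rw [SimpleGraph.mem_neighborFinset] at hy
        have h1 := hstep x y hy
        have h2 := hstep y x hy.symm
        simp only [Finset.mem_union, Finset.mem_filter, Finset.mem_univ, true_and,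
          hℓx x, hℓx y]
        omega
    have hcardle := Finset.card_le_card hsubset
    have hxn : x ∉ G.neighborFinset x := by simp
    rw [Finset.card_insert_of_notMem hxn] at hcardle
    have hun := (Finset.card_union_le
      (Finset.univ.filter fun y => ℓ y = ℓ x - 1)
      ((Finset.univ.filter fun y => ℓ y = ℓ x) ∪
       (Finset.univ.filter fun y => ℓ y = ℓ x + 1))).trans
      (Nat.add_le_add_left (Finset.card_union_le _ _) _)
    have hdegeq : G.degree x = (G.neighborFinset x).card := rfl
    rw [hcj (ℓ x - 1), hcj (ℓ x), hcj (ℓ x + 1)]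
    omega
  -- sum over vertices
  have hhs := G.sum_degrees_eq_twice_card_edges
  have hsum2 : ∑ x : V, (G.degree x + 1) = 2 * G.edgeFinset.card + (k*(d-1)+2+m) := by
    rw [Finset.sum_add_distrib, hhs]
    simp [Finset.card_univ, hcard]
  have hfib : ∑ x : V, (c (ℓ x - 1) + c (ℓ x) + c (ℓ x + 1))
      = ∑ j ∈ Finset.range (d+2), c j * (c (j-1) + c j + c (j+1)) := by
    rw [← Finset.sum_fiberwise_of_maps_to (g := ℓ) (t := Finset.range (d+2))
      (fun x _ => by
        simp only [Finset.mem_range]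
        rw [hℓx]
        have := hle x
        omega)]
    refine Finset.sum_congr rfl fun j _ => ?_
    have hcon2 : ∀ x ∈ Finset.univ.filter (fun x => ℓ x = j),
        c (ℓ x - 1) + c (ℓ x) + c (ℓ x + 1) = c (j-1) + c j + c (j+1) := by
      intro x hx
      rw [Finset.mem_filter] at hx
      rw [hx.2]
    rw [Finset.sum_congr rfl hcon2, Finset.sum_const, smul_eq_mul, ← hcj]
  have hmono : ∑ x : V, (G.degree x + 1) ≤ ∑ x : V, (c (ℓ x - 1) + c (ℓ x) + c (ℓ x + 1)) :=
    Finset.sum_le_sum fun x _ => hdeg x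
  have hmain := OreArith.main_ineq (m := m) hk hd c hc0 hc1 hck hcd1 hctop hsum
  have hQdef : OreArith.Q c (d+2)
      = ∑ j ∈ Finset.range (d+2), c j * (c (j-1) + c j + c (j+1)) := rfl
  omega

end OreGraph

namespace OreBuild
open OreArith

variable (k d m : ℕ)

def sz (j : Fin (d+1)) : ℕ :=
  if j.val = 0 then 1 else if j.val = d then 1 else if j.val = 2 then k + m else k

lemma sz_pos (hk : 1 ≤ k) (j : Fin (d+1)) : 1 ≤ sz k d m j := by
  unfold sz; split_ifs <;> omega

abbrev Vx : Type := (j : Fin (d+1)) × Fin (sz k d m j)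

def Gr : SimpleGraph (Vx k d m) where
  Adj x y := x ≠ y ∧ x.1.val ≤ y.1.val + 1 ∧ y.1.val ≤ x.1.val + 1
  symm := by
    constructor
    intro x y h
    exact ⟨h.1.symm, h.2.2, h.2.1⟩
  loopless := ⟨fun x h => h.1 rfl⟩

instance : DecidableRel (Gr k d m).Adj :=
  fun x y => inferInstanceAs (Decidable (x ≠ y ∧ x.1.val ≤ y.1.val + 1 ∧ y.1.val ≤ x.1.val + 1))

lemma adj_iff {x y : Vx k d m} :
    (Gr k d m).Adj x y ↔ x ≠ y ∧ x.1.val ≤ y.1.val + 1 ∧ y.1.val ≤ x.1.val + 1 := Iff.rfl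

lemma sigma_fiber {ι : Type*} [DecidableEq ι] [Fintype ι] {β : ι → Type*}
    [∀ i, Fintype (β i)] (i : ι) :
    ((Finset.univ : Finset ((j : ι) × β j)).filter fun x => x.1 = i).card
      = Fintype.card (β i) := by
  rw [Fintype.card]
  rw [← Finset.card_map ⟨Sigma.mk i, sigma_mk_injective⟩]
  congr 1
  ext x
  simp only [Finset.mem_filter, Finset.mem_univ, true_and, Finset.mem_map,
    Function.Embedding.coeFn_mk]
  constructor
  · intro h
    obtain ⟨x1, x2⟩ := x
    dsimp at h
    subst h
    exact ⟨x2, rfl⟩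
  · rintro ⟨a, _, rfl⟩
    rfl

lemma fibcard (hk : 1 ≤ k) (hd : 4 ≤ d) (j : ℕ) :
    ((Finset.univ : Finset (Vx k d m)).filter fun x => x.1.val + 1 = j).card
      = cc k d m j := by
  rcases Nat.eq_zero_or_pos j with rfl | hj
  · rw [show cc k d m 0 = 0 from rfl, Finset.card_eq_zero, Finset.filter_eq_empty_iff]
    intro x _; omega
  rcases Nat.lt_or_ge j (d+2) with hjlt | hjge
  · -- j = i+1 with i ≤ d
    obtain ⟨i, rfl⟩ : ∃ i, j = i + 1 := ⟨j - 1, by omega⟩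
    have hi : i < d + 1 := by omega
    have heq : ((Finset.univ : Finset (Vx k d m)).filter fun x => x.1.val + 1 = i + 1)
        = (Finset.univ.filter fun x : Vx k d m => x.1 = ⟨i, hi⟩) := by
      ext x
      simp only [Finset.mem_filter, Finset.mem_univ, true_and]
      constructor
      · intro h; exact Fin.ext (show x.1.val = i by omega)
      · intro h; rw [h]
    rw [heq, sigma_fiber, Fintype.card_fin]
    show (if i = 0 then 1 else if i = d then 1 else if i = 2 then k + m else k)
      = cc k d m (i+1)
    unfold cc
    split_ifs <;> first | assumption | exact ‹False›.elim | omega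
  · rw [cc_gt hjge (by omega), Finset.card_eq_zero, Finset.filter_eq_empty_iff]
    intro x _
    have := x.1.isLt
    omega

lemma card_Vx (hk : 1 ≤ k) (hd : 4 ≤ d) :
    Fintype.card (Vx k d m) = k*(d-1)+2+m := by
  rw [← Finset.card_univ]
  rw [Finset.card_eq_sum_card_fiberwise (f := fun x : Vx k d m => x.1.val + 1)
    (t := Finset.range (d+2)) (fun x _ => by
      simp only [Finset.coe_range, Set.mem_Iio, Finset.mem_range]; have := x.1.isLt; omega)]
  rw [Finset.sum_congr rfl (fun j _ => fibcard k d m hk hd j)]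
  exact sum_cc hd

end OreBuild

namespace OreBuild
open OreArith

variable {k d m : ℕ}

lemma ne_of_level {x y : Vx k d m} (h : x.1.val ≠ y.1.val) : x ≠ y :=
  fun he => h (by rw [he])

lemma level_le (x : Vx k d m) : x.1.val ≤ d := by have := x.1.isLt; omega

lemma degree_eq (hk : 1 ≤ k) (hd : 4 ≤ d) (x : Vx k d m) :
    (Gr k d m).degree x + 1
      = cc k d m (x.1.val) + cc k d m (x.1.val + 1) + cc k d m (x.1.val + 2) := by
  classical
  set B : Finset (Vx k d m) :=
    Finset.univ.filter (fun y => x.1.val ≤ y.1.val + 1 ∧ y.1.val ≤ x.1.val + 1) with hB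
  have hBmem : ∀ y, y ∈ B ↔ x.1.val ≤ y.1.val + 1 ∧ y.1.val ≤ x.1.val + 1 := by
    intro y; simp [hB]
  have hnb : (Gr k d m).neighborFinset x = B.erase x := by
    ext y
    rw [SimpleGraph.mem_neighborFinset, Finset.mem_erase, adj_iff, hBmem]
    constructor
    · rintro ⟨h1, h2, h3⟩; exact ⟨h1.symm, h2, h3⟩
    · rintro ⟨h1, h2, h3⟩; exact ⟨h1.symm, h2, h3⟩
  have hxB : x ∈ B := by rw [hBmem]; omega
  have hBcard : B.card = cc k d m (x.1.val) + cc k d m (x.1.val + 1)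
      + cc k d m (x.1.val + 2) := by
    have hsplit : B = (Finset.univ.filter fun y : Vx k d m => y.1.val + 1 = x.1.val) ∪
        ((Finset.univ.filter fun y : Vx k d m => y.1.val + 1 = x.1.val + 1) ∪
         (Finset.univ.filter fun y : Vx k d m => y.1.val + 1 = x.1.val + 2)) := by
      ext y
      rw [hBmem]
      simp only [Finset.mem_union, Finset.mem_filter, Finset.mem_univ, true_and]
      omega
    rw [hsplit, Finset.card_union_of_disjoint, Finset.card_union_of_disjoint]
    · rw [fibcard k d m hk hd, fibcard k d m hk hd, fibcard k d m hk hd]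
      ring
    · rw [Finset.disjoint_left]
      intro a ha hb
      simp only [Finset.mem_filter, Finset.mem_univ, true_and] at ha hb
      omega
    · rw [Finset.disjoint_left]
      intro a ha hb
      simp only [Finset.mem_union, Finset.mem_filter, Finset.mem_univ, true_and] at ha hb
      omega
  have hdeg : (Gr k d m).degree x = (B.erase x).card := by
    rw [← hnb]; rfl
  rw [hdeg, Finset.card_erase_of_mem hxB]
  have hpos : 1 ≤ B.card := Finset.card_pos.mpr ⟨x, hxB⟩
  omega

lemma edge_count (hk : 1 ≤ k) (hd : 4 ≤ d) :
    2 * (Gr k d m).edgeFinset.card + (k*(d-1)+2+m)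
      = (3*d-5)*k^2 + 4*k + 2 + 6*k*m + m^2 := by
  classical
  have hhs := (Gr k d m).sum_degrees_eq_twice_card_edges
  have hsum2 : ∑ x : Vx k d m, ((Gr k d m).degree x + 1)
      = 2 * (Gr k d m).edgeFinset.card + (k*(d-1)+2+m) := by
    rw [Finset.sum_add_distrib, hhs]
    simp [Finset.card_univ, card_Vx k d m hk hd]
  have hfib : ∑ x : Vx k d m, ((Gr k d m).degree x + 1)
      = ∑ j ∈ Finset.range (d+2),
          cc k d m j * (cc k d m (j-1) + cc k d m j + cc k d m (j+1)) := by
    rw [← Finset.sum_fiberwise_of_maps_to (g := fun x : Vx k d m => x.1.val + 1)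
      (t := Finset.range (d+2)) (fun x _ => by
        simp only [Finset.mem_range]; have := level_le x; omega)]
    refine Finset.sum_congr rfl fun j _ => ?_
    have hcon2 : ∀ x ∈ Finset.univ.filter (fun x : Vx k d m => x.1.val + 1 = j),
        (Gr k d m).degree x + 1 = cc k d m (j-1) + cc k d m j + cc k d m (j+1) := by
      intro x hx
      rw [Finset.mem_filter] at hx
      rw [degree_eq hk hd x]
      rw [show j - 1 = x.1.val from by omega, show j = x.1.val + 1 from by omega,
        show x.1.val + 1 + 1 = x.1.val + 2 from rfl]
    rw [Finset.sum_congr rfl hcon2, Finset.sum_const, smul_eq_mul,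
      fibcard k d m hk hd j]
  have hq := Q_cc (k := k) (d := d) (m := m) hd
  unfold Q at hq
  rw [← hsum2, hfib]
  exact hq

lemma exists_walk (hk : 1 ≤ k) :
    ∀ (c : ℕ) (x y : Vx k d m), y.1.val = x.1.val + c → x ≠ y →
    ∃ w : (Gr k d m).Walk x y, w.length ≤ max c 1 := by
  intro c
  induction c with
  | zero =>
    intro x y h hne
    have hadj : (Gr k d m).Adj x y := ⟨hne, by omega, by omega⟩
    exact ⟨hadj.toWalk, by simp⟩
  | succ c ih =>
    intro x y h hne
    rcases Nat.eq_zero_or_pos c with rfl | hc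
    · have hadj : (Gr k d m).Adj x y := ⟨hne, by omega, by omega⟩
      exact ⟨hadj.toWalk, by simp⟩
    · have hlev : x.1.val + c < d + 1 := by have := y.1.isLt; omega
      set z : Vx k d m := ⟨⟨x.1.val + c, hlev⟩, ⟨0, sz_pos k d m hk _⟩⟩ with hz
      have hzl : z.1.val = x.1.val + c := rfl
      have hxz : x ≠ z := ne_of_level (by rw [hzl]; omega)
      obtain ⟨w, hw⟩ := ih x z hzl hxz
      have hadj : (Gr k d m).Adj z y := by
        refine ⟨ne_of_level ?_, ?_, ?_⟩ <;> rw [hzl] <;> omega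
      exact ⟨w.concat hadj, by rw [SimpleGraph.Walk.length_concat]; omega⟩

lemma reach (hk : 1 ≤ k) (hd : 4 ≤ d) (x y : Vx k d m) :
    ∃ w : (Gr k d m).Walk x y, w.length ≤ d := by
  by_cases hxy : x = y
  · subst hxy; exact ⟨SimpleGraph.Walk.nil, by simp⟩
  rcases le_total x.1.val y.1.val with hle | hle
  · obtain ⟨w, hw⟩ := exists_walk hk (y.1.val - x.1.val) x y (by omega) hxy
    refine ⟨w, hw.trans ?_⟩
    have := level_le y
    omega
  · obtain ⟨w, hw⟩ := exists_walk hk (x.1.val - y.1.val) y x (by omega) (Ne.symm hxy)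
    refine ⟨w.reverse, ?_⟩
    rw [SimpleGraph.Walk.length_reverse]
    have := level_le x
    omega

def u0 (hk : 1 ≤ k) : Vx k d m := ⟨⟨0, Nat.succ_pos d⟩, ⟨0, sz_pos k d m hk _⟩⟩
def v0 (hk : 1 ≤ k) : Vx k d m := ⟨⟨d, Nat.lt_succ_self d⟩, ⟨0, sz_pos k d m hk _⟩⟩

lemma walk_level : ∀ {x y : Vx k d m} (w : (Gr k d m).Walk x y),
    y.1.val ≤ x.1.val + w.length := by
  intro x y w
  induction w with
  | nil => simp
  | cons h p ih =>
    rw [SimpleGraph.Walk.length_cons]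
    have := h.2.2
    omega

lemma ediam_eq (hk : 1 ≤ k) (hd : 4 ≤ d) : (Gr k d m).ediam = d := by
  apply le_antisymm
  · apply SimpleGraph.ediam_le_of_edist_le
    intro x y
    obtain ⟨w, hw⟩ := reach hk hd x y
    exact le_trans (SimpleGraph.edist_le w) (by exact_mod_cast Nat.cast_le.mpr hw)
  · refine le_trans ?_ (SimpleGraph.edist_le_ediam (u := u0 hk) (v := v0 hk))
    rw [SimpleGraph.edist_eq_sInf]
    apply le_sInf
    rintro b ⟨w, rfl⟩
    have := walk_level w
    have hu : (u0 hk (k := k) (d := d) (m := m)).1.val = 0 := rfl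
    have hv : (v0 hk (k := k) (d := d) (m := m)).1.val = d := rfl
    rw [hu, hv] at this
    exact_mod_cast Nat.cast_le.mpr (by omega : d ≤ w.length)

lemma diam_eq (hk : 1 ≤ k) (hd : 4 ≤ d) : (Gr k d m).diam = d := by
  unfold SimpleGraph.diam
  rw [ediam_eq hk hd]
  simp

lemma conn (hk : 1 ≤ k) (hd : 4 ≤ d) : (Gr k d m).Connected := by
  rw [SimpleGraph.connected_iff]
  exact ⟨fun x y => ⟨(reach hk hd x y).choose⟩, ⟨u0 hk⟩⟩

end OreBuild

namespace OreBuild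
open OreArith

variable {k d m : ℕ}

lemma induced_conn (hk : 1 ≤ k) (hd : 4 ≤ d) (S : Set (Vx k d m)) (hS : S.ncard < k) :
    ((Gr k d m).induce Sᶜ).Connected := by
  classical
  have hd1 : (1:ℕ) ≤ d - 1 := by omega
  have hrep : ∀ i, 1 ≤ i → i ≤ d-1 → ∃ z : Vx k d m, z ∉ S ∧ z.1.val = i := by
    intro i h1 hi
    by_contra hcon
    push_neg at hcon
    have hsub : {z : Vx k d m | z.1.val = i} ⊆ S := by
      intro z hz
      by_contra hzS
      exact (hcon z hzS) hz
    have hcardfib : ({z : Vx k d m | z.1.val = i}).ncard = cc k d m (i+1) := by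
      rw [Set.ncard_eq_toFinset_card']
      rw [← fibcard k d m hk hd (i+1)]
      congr 1
      ext x
      simp only [Set.mem_toFinset, Set.mem_setOf_eq, Finset.mem_filter, Finset.mem_univ,
        true_and]
      omega
    have hge : k ≤ ({z : Vx k d m | z.1.val = i}).ncard := by
      rw [hcardfib]
      exact cc_ge_k (by omega) (by omega)
    have := Set.ncard_le_ncard hsub S.toFinite
    omega
  choose r hrS hrl using hrep
  have hbS : r 1 le_rfl hd1 ∉ S := hrS 1 le_rfl hd1
  have hchain : ∀ i (h1 : 1 ≤ i) (hi : i ≤ d-1),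
      ((Gr k d m).induce Sᶜ).Reachable ⟨r 1 le_rfl hd1, hbS⟩
        ⟨r i h1 hi, hrS i h1 hi⟩ := by
    intro i
    induction i with
    | zero => intro h1 _; exact absurd h1 (by omega)
    | succ i ih =>
      intro h1 hi
      by_cases h0 : i = 0
      · subst h0
        exact SimpleGraph.Reachable.refl _
      · have hprev := ih (by omega) (by omega)
        refine hprev.trans (SimpleGraph.Adj.reachable ?_)
        show (Gr k d m).Adj (r i (by omega) (by omega)) (r (i+1) h1 hi)
        refine ⟨ne_of_level ?_, ?_, ?_⟩ <;> rw [hrl, hrl] <;> omega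
  have hbase : ∀ x : ↥Sᶜ, ((Gr k d m).induce Sᶜ).Reachable x ⟨r 1 le_rfl hd1, hbS⟩ := by
    rintro ⟨x, hx⟩
    by_cases hlow : 1 ≤ x.1.val ∧ x.1.val ≤ d - 1
    · have hch := hchain x.1.val hlow.1 hlow.2
      by_cases hxeq : x = r x.1.val hlow.1 hlow.2
      · have he : (⟨x, hx⟩ : ↥Sᶜ) = ⟨r x.1.val hlow.1 hlow.2, hrS x.1.val hlow.1 hlow.2⟩ :=
          Subtype.ext hxeq
        rw [he]
        exact hch.symm
      · refine (SimpleGraph.Adj.reachable ?_).trans hch.symm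
        show (Gr k d m).Adj x (r x.1.val hlow.1 hlow.2)
        refine ⟨hxeq, ?_, ?_⟩ <;> rw [hrl] <;> omega
    · have hl := level_le x
      rcases (by omega : x.1.val = 0 ∨ x.1.val = d) with h0 | hdd
      · refine (SimpleGraph.Adj.reachable ?_).trans (hchain 1 le_rfl hd1).symm
        show (Gr k d m).Adj x (r 1 le_rfl hd1)
        refine ⟨ne_of_level ?_, ?_, ?_⟩ <;> rw [hrl] <;> omega
      · have hdm : 1 ≤ d - 1 := hd1
        refine (SimpleGraph.Adj.reachable ?_).trans (hchain (d-1) hd1 le_rfl).symm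
        show (Gr k d m).Adj x (r (d-1) hd1 le_rfl)
        refine ⟨ne_of_level ?_, ?_, ?_⟩ <;> rw [hrl] <;> omega
  rw [SimpleGraph.connected_iff]
  exact ⟨fun x y => (hbase x).trans (hbase y).symm, ⟨⟨r 1 le_rfl hd1, hbS⟩⟩⟩

end OreBuild


lemma rhs_double (k d n m : ℕ) (hk : 1 ≤ k) (hd : 4 ≤ d) (hnm : n = k*(d-1)+2+m) :
    2 * ((((3 * (d : ℤ) - 5) * (k : ℤ) ^ 2 + (5 - (d : ℤ)) * (k : ℤ))) / 2
      + ((n : ℤ) - k * d + k - 2) * (((n : ℤ) - k * d + k - 2) - 1) / 2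
      + 3 * (k : ℤ) * ((n : ℤ) - k * d + k - 2))
    = (((3*d-5)*k^2 + 4*k + 2 + 6*k*m + m^2 : ℕ) : ℤ) - (n : ℤ) := by
  have hd1 : (1:ℕ) ≤ d := by omega
  have hn : (n:ℤ) = (k:ℤ)*((d:ℤ)-1) + 2 + m := by
    rw [hnm]; push_cast [Nat.cast_sub hd1]; ring
  have hmm : ((n:ℤ) - k*d + k - 2) = (m:ℤ) := by rw [hn]; ring
  rw [hmm]
  obtain ⟨t, ht⟩ := Int.even_mul_succ_self ((k:ℤ)-1)
  obtain ⟨s, hs⟩ := Int.even_mul_succ_self ((m:ℤ)-1)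
  have ht' : ((k:ℤ)-1)*k = 2*t := by linear_combination ht
  have hs' : ((m:ℤ))*((m:ℤ)-1) = 2*s := by linear_combination hs
  have e1 : (3*(d:ℤ)-5)*(k:ℤ)^2 + (5-(d:ℤ))*(k:ℤ) = 2*((3*(d:ℤ)-5)*t + (d:ℤ)*k) := by
    linear_combination (3*(d:ℤ)-5) * ht'
  rw [e1, hs', Int.mul_ediv_cancel_left _ two_ne_zero, Int.mul_ediv_cancel_left _ two_ne_zero]
  have hB : (((3*d-5)*k^2 + 4*k + 2 + 6*k*m + m^2 : ℕ) : ℤ)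
      = ((3*(d:ℤ)-5)*(k:ℤ)^2 + 4*k + 2 + 6*(k:ℤ)*m + (m:ℤ)^2) := by
    push_cast [Nat.cast_sub (by omega : 5 ≤ 3*d)]; ring
  rw [hB, hn]
  linear_combination (-(3*(d:ℤ)-5)) * ht' - hs'

/-- A graph is `k`-connected if it has more than `k` vertices and remains connected
whenever fewer than `k` vertices are deleted. -/
def SimpleGraph.KConnected {V : Type*} [Fintype V] (k : ℕ) (G : SimpleGraph V) : Prop :=
  k < Fintype.card V ∧ ∀ S : Set V, S.ncard < k → (G.induce Sᶜ).Connected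

/-- Ore's theorem, case `d ≥ 4`: the maximum size of a simple `k`-connected graph of
order `n` and diameter `d` equals
`((3d-5)k² + (5-d)k)/2 + C(n-kd+k-2, 2) + 3k(n-kd+k-2)`. -/
theorem max_size_kConnected_diam_ge_four (k d n : ℕ) (hk : 1 ≤ k) (hd : 4 ≤ d)
    (hn : k * (d - 1) + 2 ≤ n) :
    (∀ (V : Type) [Fintype V] (G : SimpleGraph V),
        G.KConnected k → Fintype.card V = n → G.diam = d →
        (G.edgeSet.ncard : ℤ) ≤
          ((3 * (d : ℤ) - 5) * (k : ℤ) ^ 2 + (5 - (d : ℤ)) * (k : ℤ)) / 2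
            + ((n : ℤ) - k * d + k - 2) * (((n : ℤ) - k * d + k - 2) - 1) / 2
            + 3 * (k : ℤ) * ((n : ℤ) - k * d + k - 2)) ∧
    (∃ (V : Type) (_ : Fintype V) (G : SimpleGraph V),
        G.KConnected k ∧ Fintype.card V = n ∧ G.diam = d ∧
        (G.edgeSet.ncard : ℤ) =
          ((3 * (d : ℤ) - 5) * (k : ℤ) ^ 2 + (5 - (d : ℤ)) * (k : ℤ)) / 2
            + ((n : ℤ) - k * d + k - 2) * (((n : ℤ) - k * d + k - 2) - 1) / 2
            + 3 * (k : ℤ) * ((n : ℤ) - k * d + k - 2)) := by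
  obtain ⟨m, hm⟩ : ∃ m, n = k*(d-1)+2+m := ⟨n - (k*(d-1)+2), by omega⟩
  have hrd := rhs_double k d n m hk hd hm
  constructor
  · intro V _ G hKC hcard hdiam
    classical
    have hup := OreGraph.upper_main (m := m) hk hd G hKC.2 (by rw [hcard, hm]) hdiam
    have hE : (G.edgeSet.ncard : ℤ) = (G.edgeFinset.card : ℤ) := by
      rw [← SimpleGraph.coe_edgeFinset, Set.ncard_coe_finset]
    rw [hE]
    have h2 : 2 * G.edgeFinset.card + n ≤ (3*d-5)*k^2+4*k+2+6*k*m+m^2 := by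
      rw [hm]; exact hup
    have h3 : 2 * (G.edgeFinset.card : ℤ) + (n : ℤ)
        ≤ (((3*d-5)*k^2+4*k+2+6*k*m+m^2 : ℕ) : ℤ) := by exact_mod_cast h2
    linarith [hrd]
  · refine ⟨OreBuild.Vx k d m, inferInstance, OreBuild.Gr k d m,
      ⟨?_, fun S hS => OreBuild.induced_conn hk hd S hS⟩, ?_, OreBuild.diam_eq hk hd, ?_⟩
    · rw [OreBuild.card_Vx k d m hk hd]
      have h3 : k * 3 ≤ k * (d-1) := Nat.mul_le_mul_left k (by omega)
      omega
    · rw [OreBuild.card_Vx k d m hk hd]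
      omega
    · classical
      have hec := OreBuild.edge_count (k := k) (d := d) (m := m) hk hd
      rw [← SimpleGraph.coe_edgeFinset, Set.ncard_coe_finset]
      have h2 : 2 * ((OreBuild.Gr k d m).edgeFinset.card : ℤ) + (n : ℤ)
          = (((3*d-5)*k^2+4*k+2+6*k*m+m^2 : ℕ) : ℤ) := by
        have h1 : 2 * (OreBuild.Gr k d m).edgeFinset.card + n
            = (3*d-5)*k^2+4*k+2+6*k*m+m^2 := by rw [hm]; exact hec
        exact_mod_cast h1
      linarith [hrd]
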